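/- For every n ∈ ℕ and every increasing convex w ∈ 𝓘, the n-th Bellman iterate satisfies (Tⁿw)(x) = w*(x) for all x ∈ X with x ≤ n·η. In particular, for n ≥ x̂/η one has Tⁿw = w* on all of X. -/

import Mathlib

open Set Filter

/-- The Bellman operator `(Tw)(x) = inf_{0 ≤ a ≤ x} { ℓ(a) + β·w(x − a) }`. -/
noncomputable def bellman (β : ℝ) (ℓ : ℝ → ℝ) (w : ℝ → ℝ) : ℝ → ℝ :=
  fun x => sInf ((fun a => ℓ a + β * w (x - a)) '' Set.Icc 0 x)

/-- The candidate class 𝓘: continuous functions on `[0, x̂]` with `ℓ'(0)·x ≤ w(x) ≤ ℓ(x)`. -/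
def candidateClass (xhat : ℝ) (ℓ ℓd : ℝ → ℝ) : Set (ℝ → ℝ) :=
  {w | ContinuousOn w (Set.Icc 0 xhat) ∧
    ∀ x ∈ Set.Icc 0 xhat, ℓd 0 * x ≤ w x ∧ w x ≤ ℓ x}

section Aux

variable {xhat β : ℝ} {ℓ ℓd : ℝ → ℝ}

lemma le_grad (hconv : ConvexOn ℝ (Icc 0 xhat) ℓ)
    (hderiv : ∀ x ∈ Icc 0 xhat, HasDerivAt ℓ (ℓd x) x)
    {a b : ℝ} (ha : a ∈ Icc 0 xhat) (hb : b ∈ Icc 0 xhat) (hab : a ≤ b) :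
    ℓd a * (b - a) ≤ ℓ b - ℓ a := by
  rcases eq_or_lt_of_le hab with rfl | h
  · simp
  · have hs := hconv.le_slope_of_hasDerivAt ha hb h (hderiv a ha)
    rw [slope_def_field] at hs
    have hba : (0:ℝ) < b - a := by linarith
    rw [le_div_iff₀ hba] at hs
    linarith

lemma grad_le (hconv : ConvexOn ℝ (Icc 0 xhat) ℓ)
    (hderiv : ∀ x ∈ Icc 0 xhat, HasDerivAt ℓ (ℓd x) x)
    {a b : ℝ} (ha : a ∈ Icc 0 xhat) (hb : b ∈ Icc 0 xhat) (hab : a ≤ b) :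
    ℓ b - ℓ a ≤ ℓd b * (b - a) := by
  rcases eq_or_lt_of_le hab with rfl | h
  · simp
  · have hs := hconv.slope_le_of_hasDerivAt ha hb h (hderiv b hb)
    rw [slope_def_field] at hs
    have hba : (0:ℝ) < b - a := by linarith
    rw [div_le_iff₀ hba] at hs
    linarith

lemma ld_mono (hconv : ConvexOn ℝ (Icc 0 xhat) ℓ)
    (hderiv : ∀ x ∈ Icc 0 xhat, HasDerivAt ℓ (ℓd x) x) :
    MonotoneOn ℓd (Icc 0 xhat) := by
  intro a ha b hb hab
  rcases eq_or_lt_of_le hab with rfl | h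
  · exact le_refl _
  · have h1 := le_grad hconv hderiv ha hb hab
    have h2 := grad_le hconv hderiv ha hb hab
    have hba : (0:ℝ) < b - a := by linarith
    nlinarith



lemma bellman_floor (hβ : 1 < β) (hd0 : 0 < ℓd 0)
    (hφℓ : ∀ y ∈ Icc 0 xhat, ℓd 0 * y ≤ ℓ y)
    {F : ℝ → ℝ} (hFlb : ∀ y ∈ Icc 0 xhat, ℓd 0 * y ≤ F y)
    {x : ℝ} (hx : x ∈ Icc 0 xhat) :
    ∀ a ∈ Icc 0 x, ℓd 0 * x ≤ ℓ a + β * F (x - a) := by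
  intro a ha
  have hax : a ∈ Icc 0 xhat := ⟨ha.1, ha.2.trans hx.2⟩
  have hxa : x - a ∈ Icc 0 xhat := ⟨by linarith [ha.2], by linarith [ha.1, hx.2]⟩
  have h1 : ℓd 0 * a ≤ ℓ a := hφℓ a hax
  have h2 : ℓd 0 * (x - a) ≤ F (x - a) := hFlb _ hxa
  have h3 : 0 ≤ ℓd 0 * (x - a) := mul_nonneg hd0.le (by linarith [ha.2])
  nlinarith

lemma le_bellman {w : ℝ → ℝ} {x c : ℝ} (hx : 0 ≤ x)
    (h : ∀ a ∈ Icc 0 x, c ≤ ℓ a + β * w (x - a)) : c ≤ bellman β ℓ w x :=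
  le_csInf ⟨_, mem_image_of_mem _ (⟨le_refl 0, hx⟩ : (0:ℝ) ∈ Icc 0 x)⟩
    (by rintro y ⟨a, ha, rfl⟩; exact h a ha)

lemma bellman_le {w : ℝ → ℝ} {x a c : ℝ} (ha : a ∈ Icc 0 x)
    (h : ∀ b ∈ Icc 0 x, c ≤ ℓ b + β * w (x - b)) :
    bellman β ℓ w x ≤ ℓ a + β * w (x - a) :=
  csInf_le ⟨c, by rintro y ⟨b, hb, rfl⟩; exact h b hb⟩ (mem_image_of_mem _ ha)

lemma bellman_congr {u v : ℝ → ℝ} {x : ℝ} (hx : 0 ≤ x)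
    (h : ∀ y ∈ Icc 0 x, u y = v y) : bellman β ℓ u x = bellman β ℓ v x := by
  unfold bellman
  congr 1
  apply image_congr
  intro a ha
  rw [h (x - a) ⟨by linarith [ha.2], by linarith [ha.1]⟩]

lemma bellman_mono (hβ : 1 < β) (hd0 : 0 < ℓd 0)
    (hφℓ : ∀ y ∈ Icc 0 xhat, ℓd 0 * y ≤ ℓ y)
    {u v : ℝ → ℝ} (hu : ∀ y ∈ Icc 0 xhat, ℓd 0 * y ≤ u y)
    (huv : ∀ y ∈ Icc 0 xhat, u y ≤ v y) {x : ℝ} (hx : x ∈ Icc 0 xhat) :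
    bellman β ℓ u x ≤ bellman β ℓ v x := by
  apply le_bellman hx.1
  intro a ha
  have hxa : x - a ∈ Icc 0 xhat := ⟨by linarith [ha.2], by linarith [ha.1, hx.2]⟩
  have h1 : bellman β ℓ u x ≤ ℓ a + β * u (x - a) :=
    bellman_le ha (bellman_floor hβ hd0 hφℓ hu hx)
  have h2 : u (x - a) ≤ v (x - a) := huv _ hxa
  nlinarith

/-- Invariant preserved by the Bellman operator. -/
def BInv (xhat β : ℝ) (ℓ ℓd : ℝ → ℝ) (F : ℝ → ℝ) : Prop :=
  F 0 = 0 ∧ (∀ x ∈ Icc 0 xhat, ℓd 0 * x ≤ F x) ∧ (∀ x ∈ Icc 0 xhat, F x ≤ ℓ x) ∧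
    ConvexOn ℝ (Icc 0 xhat) F

lemma inv_step (hxhat : 0 ≤ xhat) (hzero : ℓ 0 = 0)
    (hconv : ConvexOn ℝ (Icc 0 xhat) ℓ)
    (hφℓ : ∀ y ∈ Icc 0 xhat, ℓd 0 * y ≤ ℓ y)
    (hd0 : 0 < ℓd 0) (hβ : 1 < β)
    {F : ℝ → ℝ} (hF : BInv xhat β ℓ ℓd F) : BInv xhat β ℓ ℓd (bellman β ℓ F) := by
  obtain ⟨hF0, hFlb, hFub, hFconv⟩ := hF
  have hβ0 : (0:ℝ) ≤ β := by linarith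
  refine ⟨?_, ?_, ?_, ?_⟩
  · simp [bellman, Set.Icc_self, hzero, hF0]
  · intro x hx
    exact le_bellman hx.1 (bellman_floor hβ hd0 hφℓ hFlb hx)
  · intro x hx
    have h := bellman_le (⟨hx.1, le_refl x⟩ : x ∈ Icc 0 x)
      (bellman_floor hβ hd0 hφℓ hFlb hx)
    simpa [hF0] using h
  · refine ⟨convex_Icc 0 xhat, ?_⟩
    intro x hx y hy s t hs ht hst
    simp only [smul_eq_mul]
    rcases eq_or_lt_of_le hs with rfl | hs'
    · have ht1 : t = 1 := by linarith
      subst ht1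
      simp
    rcases eq_or_lt_of_le ht with rfl | ht'
    · have hs1 : s = 1 := by linarith
      subst hs1
      simp
    refine le_of_forall_pos_le_add ?_
    intro ε hε
    have hne1 : ((fun a => ℓ a + β * F (x - a)) '' Icc 0 x).Nonempty :=
      ⟨_, mem_image_of_mem _ (⟨le_refl 0, hx.1⟩ : (0:ℝ) ∈ Icc 0 x)⟩
    have hne2 : ((fun a => ℓ a + β * F (y - a)) '' Icc 0 y).Nonempty :=
      ⟨_, mem_image_of_mem _ (⟨le_refl 0, hy.1⟩ : (0:ℝ) ∈ Icc 0 y)⟩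
    obtain ⟨u1, hu1, hlt1⟩ := exists_lt_of_csInf_lt hne1
      (lt_add_of_pos_right (bellman β ℓ F x) hε)
    obtain ⟨u2, hu2, hlt2⟩ := exists_lt_of_csInf_lt hne2
      (lt_add_of_pos_right (bellman β ℓ F y) hε)
    obtain ⟨a1, ha1, rfl⟩ := hu1
    obtain ⟨a2, ha2, rfl⟩ := hu2
    have hz : s * x + t * y ∈ Icc 0 xhat := by
      constructor
      · have := mul_nonneg hs hx.1; have := mul_nonneg ht hy.1; linarith
      · nlinarith [hx.2, hy.2]
    have ha : s * a1 + t * a2 ∈ Icc 0 (s * x + t * y) := by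
      constructor
      · have := mul_nonneg hs ha1.1; have := mul_nonneg ht ha2.1; linarith
      · nlinarith [ha1.2, ha2.2]
    have hstep : bellman β ℓ F (s * x + t * y) ≤
        ℓ (s * a1 + t * a2) + β * F (s * x + t * y - (s * a1 + t * a2)) :=
      bellman_le ha (bellman_floor hβ hd0 hφℓ hFlb hz)
    have hℓa : ℓ (s * a1 + t * a2) ≤ s * ℓ a1 + t * ℓ a2 := by
      have h := hconv.2 (⟨ha1.1, ha1.2.trans hx.2⟩ : a1 ∈ Icc 0 xhat)
        (⟨ha2.1, ha2.2.trans hy.2⟩ : a2 ∈ Icc 0 xhat) hs ht hst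
      simpa using h
    have hFa : F (s * x + t * y - (s * a1 + t * a2)) ≤
        s * F (x - a1) + t * F (y - a2) := by
      have hm1 : x - a1 ∈ Icc 0 xhat := ⟨by linarith [ha1.2], by linarith [ha1.1, hx.2]⟩
      have hm2 : y - a2 ∈ Icc 0 xhat := ⟨by linarith [ha2.2], by linarith [ha2.1, hy.2]⟩
      have h := hFconv.2 hm1 hm2 hs ht hst
      have harg : s * x + t * y - (s * a1 + t * a2) = s * (x - a1) + t * (y - a2) := by ring
      rw [harg]
      simpa using h
    have e1 : s * (ℓ a1 + β * F (x - a1)) ≤ s * (bellman β ℓ F x + ε) :=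
      mul_le_mul_of_nonneg_left hlt1.le hs
    have e2 : t * (ℓ a2 + β * F (y - a2)) ≤ t * (bellman β ℓ F y + ε) :=
      mul_le_mul_of_nonneg_left hlt2.le ht
    have hβF : β * F (s * x + t * y - (s * a1 + t * a2)) ≤
        β * (s * F (x - a1) + t * F (y - a2)) :=
      mul_le_mul_of_nonneg_left hFa hβ0
    nlinarith

lemma convex_slope_lb (hd0 : 0 < ℓd 0) {F : ℝ → ℝ}
    (hFconv : ConvexOn ℝ (Icc 0 xhat) F) (hF0 : F 0 = 0)
    (hFlb : ∀ y ∈ Icc 0 xhat, ℓd 0 * y ≤ F y)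
    {c y : ℝ} (hc : 0 ≤ c) (hcy : c ≤ y) (hy : y ≤ xhat) :
    F c + ℓd 0 * (y - c) ≤ F y := by
  rcases eq_or_lt_of_le hc with rfl | hc'
  · have := hFlb y ⟨hcy, hy⟩
    rw [hF0]
    linarith
  · rcases eq_or_lt_of_le hcy with rfl | hcy'
    · simp
    · have hy0 : 0 < y := lt_trans hc' hcy'
      have hmem0 : (0:ℝ) ∈ Icc 0 xhat := ⟨le_refl _, by linarith⟩
      have hmemy : y ∈ Icc 0 xhat := ⟨by linarith, hy⟩
      have ht1 : 0 ≤ 1 - c / y := by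
        rw [sub_nonneg, div_le_one hy0]; exact hcy
      have ht2 : 0 ≤ c / y := div_nonneg hc (le_of_lt hy0)
      have hsum : (1 - c / y) + c / y = 1 := by ring
      have h := hFconv.2 hmem0 hmemy ht1 ht2 hsum
      simp only [smul_eq_mul, mul_zero, hF0, zero_add] at h
      have harg : c / y * y = c := by field_simp
      rw [harg] at h
      have hFy : ℓd 0 * y ≤ F y := hFlb y hmemy
      have hyc : 0 ≤ y - c := by linarith
      -- from h : F c ≤ (c/y) * F y
      have h' : y * F c ≤ c * F y := by
        have := mul_le_mul_of_nonneg_left h (le_of_lt hy0)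
        calc y * F c ≤ y * (c / y * F y) := this
          _ = c * F y := by field_simp
      nlinarith

lemma csInf_image_Icc_eq {h : ℝ → ℝ} {a₀ x c : ℝ} (h0 : 0 ≤ a₀) (hax : a₀ ≤ x)
    (hbdd : ∀ a ∈ Icc 0 x, c ≤ h a)
    (hkey : ∀ a ∈ Icc 0 x, a ≤ a₀ → h a₀ ≤ h a) :
    sInf (h '' Icc 0 x) = sInf (h '' Icc a₀ x) := by
  have hsub : Icc a₀ x ⊆ Icc 0 x := Icc_subset_Icc h0 (le_refl x)
  have hne' : (h '' Icc a₀ x).Nonempty :=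
    ⟨h a₀, mem_image_of_mem _ (⟨le_refl a₀, hax⟩ : a₀ ∈ Icc a₀ x)⟩
  have hbdd1 : BddBelow (h '' Icc 0 x) := ⟨c, by rintro y ⟨a, ha, rfl⟩; exact hbdd a ha⟩
  have hbdd2 : BddBelow (h '' Icc a₀ x) := hbdd1.mono (image_mono hsub)
  apply le_antisymm
  · exact csInf_le_csInf hbdd1 hne' (image_mono hsub)
  · apply le_csInf ⟨h a₀, mem_image_of_mem _ (⟨h0, hax⟩ : a₀ ∈ Icc 0 x)⟩
    rintro y ⟨a, ha, rfl⟩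
    rcases le_total a a₀ with hle | hge
    · exact le_trans (csInf_le hbdd2 (mem_image_of_mem _ (⟨le_refl a₀, hax⟩ : a₀ ∈ Icc a₀ x))) (hkey a ha hle)
    · exact csInf_le hbdd2 (mem_image_of_mem _ ⟨hge, ha.2⟩)

lemma inv_iter (hxhat : 0 ≤ xhat) (hzero : ℓ 0 = 0)
    (hconv : ConvexOn ℝ (Icc 0 xhat) ℓ)
    (hφℓ : ∀ y ∈ Icc 0 xhat, ℓd 0 * y ≤ ℓ y)
    (hd0 : 0 < ℓd 0) (hβ : 1 < β)
    {F : ℝ → ℝ} (hF : BInv xhat β ℓ ℓd F) (n : ℕ) :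
    BInv xhat β ℓ ℓd ((bellman β ℓ)^[n] F) := by
  induction n with
  | zero => simpa using hF
  | succ n ih =>
      rw [Function.iterate_succ_apply']
      exact inv_step hxhat hzero hconv hφℓ hd0 hβ ih

lemma inv_phi (hd0 : 0 < ℓd 0)
    (hφℓ : ∀ y ∈ Icc 0 xhat, ℓd 0 * y ≤ ℓ y) :
    BInv xhat β ℓ ℓd (fun y => ℓd 0 * y) := by
  refine ⟨by simp, fun x hx => le_refl _, fun x hx => hφℓ x hx, ?_⟩
  refine ⟨convex_Icc 0 xhat, ?_⟩
  intro x hx y hy s t hs ht hst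
  simp only [smul_eq_mul]
  rw [mul_add]
  ring_nf
  exact le_refl _

lemma inv_psi (hzero : ℓ 0 = 0) (hconv : ConvexOn ℝ (Icc 0 xhat) ℓ)
    (hφℓ : ∀ y ∈ Icc 0 xhat, ℓd 0 * y ≤ ℓ y) :
    BInv xhat β ℓ ℓd ℓ :=
  ⟨hzero, hφℓ, fun x _ => le_refl _, hconv⟩

lemma iter_sandwich (hxhat : 0 ≤ xhat) (hzero : ℓ 0 = 0)
    (hconv : ConvexOn ℝ (Icc 0 xhat) ℓ)
    (hφℓ : ∀ y ∈ Icc 0 xhat, ℓd 0 * y ≤ ℓ y)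
    (hd0 : 0 < ℓd 0) (hβ : 1 < β)
    {u v : ℝ → ℝ} (hu : BInv xhat β ℓ ℓd u)
    (hlb : ∀ y ∈ Icc 0 xhat, u y ≤ v y) (n : ℕ) :
    ∀ x ∈ Icc 0 xhat, (bellman β ℓ)^[n] u x ≤ (bellman β ℓ)^[n] v x := by
  induction n with
  | zero => exact hlb
  | succ n ih =>
      intro x hx
      rw [Function.iterate_succ_apply', Function.iterate_succ_apply']
      have hinv := inv_iter hxhat hzero hconv hφℓ hd0 hβ hu n
      exact bellman_mono hβ hd0 hφℓ hinv.2.1 ih hx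

lemma main_eq (hxhat : 0 < xhat) (hzero : ℓ 0 = 0)
    (hconv : ConvexOn ℝ (Icc 0 xhat) ℓ)
    (hderiv : ∀ x ∈ Icc 0 xhat, HasDerivAt ℓ (ℓd x) x)
    (hd0 : 0 < ℓd 0) (hβ : 1 < β)
    {η : ℝ} (hη : η ∈ Icc 0 xhat) (hηβ : ℓd η ≤ β * ℓd 0) :
    ∀ n : ℕ, ∀ x ∈ Icc 0 xhat, x ≤ n * η →
      (bellman β ℓ)^[n] (fun y => ℓd 0 * y) x = (bellman β ℓ)^[n] ℓ x := by
  have hφℓ : ∀ y ∈ Icc 0 xhat, ℓd 0 * y ≤ ℓ y := by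
    intro y hy
    have := le_grad hconv hderiv (⟨le_refl 0, hxhat.le⟩ : (0:ℝ) ∈ Icc 0 xhat) hy hy.1
    simp only [hzero, sub_zero] at this
    linarith
  intro n
  induction n with
  | zero =>
      intro x hx hx0
      have hx00 : x = 0 := le_antisymm (by simpa using hx0) hx.1
      subst hx00
      simp [hzero]
  | succ n ih =>
      intro x hx hxn
      rw [Function.iterate_succ_apply', Function.iterate_succ_apply']
      set F := (bellman β ℓ)^[n] (fun y => ℓd 0 * y) with hFdef
      set G := (bellman β ℓ)^[n] ℓ with hGdef
      have hinvF : BInv xhat β ℓ ℓd F :=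
        inv_iter hxhat.le hzero hconv hφℓ hd0 hβ (inv_phi hd0 hφℓ) n
      have hinvG : BInv xhat β ℓ ℓd G :=
        inv_iter hxhat.le hzero hconv hφℓ hd0 hβ (inv_psi hzero hconv hφℓ) n
      have hFG : ∀ y ∈ Icc 0 xhat, F y ≤ G y :=
        iter_sandwich hxhat.le hzero hconv hφℓ hd0 hβ (inv_phi hd0 hφℓ)
          (fun y hy => hφℓ y hy) n
      by_cases hcase : x ≤ n * η
      · exact bellman_congr hx.1 (fun y hy => ih y ⟨hy.1, hy.2.trans hx.2⟩ (hy.2.trans hcase))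
      · push_neg at hcase
        have hxn' : x ≤ (n : ℝ) * η + η := by
          push_cast at hxn
          linarith
        set a₀ := x - n * η with ha₀def
        have hnη0 : 0 ≤ (n:ℝ) * η := mul_nonneg (Nat.cast_nonneg n) hη.1
        have ha₀pos : 0 < a₀ := by rw [ha₀def]; linarith
        have ha₀η : a₀ ≤ η := by rw [ha₀def]; linarith
        have hnηx : (n:ℝ) * η ≤ xhat := le_trans (by linarith) hx.2
        have ha₀x : a₀ ≤ x := by rw [ha₀def]; linarith
        have hβ0 : (0:ℝ) < β := by linarith
        have hfloorF := bellman_floor hβ hd0 hφℓ hinvF.2.1 hx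
        have hfloorG := bellman_floor hβ hd0 hφℓ hinvG.2.1 hx
        have hkeyF : ∀ a ∈ Icc 0 x, a ≤ a₀ → ℓ a₀ + β * F (x - a₀) ≤ ℓ a + β * F (x - a) := by
          intro a ha hle
          have hxa0 : x - a₀ = n * η := by rw [ha₀def]; ring
          have hmema : a ∈ Icc 0 xhat := ⟨ha.1, ha.2.trans hx.2⟩
          have hmema₀ : a₀ ∈ Icc 0 xhat := ⟨ha₀pos.le, le_trans ha₀η hη.2⟩
          have hslope : F ((n:ℝ)*η) + ℓd 0 * ((x - a) - (n:ℝ) * η) ≤ F (x - a) :=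
            convex_slope_lb hd0 hinvF.2.2.2 hinvF.1 hinvF.2.1 hnη0
              (by linarith) (by linarith [ha.1, hx.2])
          have hgrad : ℓ a₀ - ℓ a ≤ ℓd a₀ * (a₀ - a) := grad_le hconv hderiv hmema hmema₀ hle
          have hda₀ : ℓd a₀ ≤ β * ℓd 0 :=
            le_trans (ld_mono hconv hderiv hmema₀ hη ha₀η) hηβ
          have h1 : ℓ a₀ - ℓ a ≤ β * ℓd 0 * (a₀ - a) := by nlinarith [sub_nonneg.2 hle]
          have h2 : β * (F ((n:ℝ)*η) + ℓd 0 * ((x - a) - (n:ℝ)*η)) ≤ β * F (x - a) :=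
            mul_le_mul_of_nonneg_left hslope hβ0.le
          rw [mul_add] at h2
          have h3 : β * ℓd 0 * (a₀ - a) = β * (ℓd 0 * ((x - a) - (n:ℝ)*η)) := by
            rw [ha₀def]; ring
          rw [hxa0]
          linarith
        have hkeyG : ∀ a ∈ Icc 0 x, a ≤ a₀ → ℓ a₀ + β * G (x - a₀) ≤ ℓ a + β * G (x - a) := by
          intro a ha hle
          have hxa0 : x - a₀ = n * η := by rw [ha₀def]; ring
          have hGa₀ : G (x - a₀) = F (x - a₀) := by
            rw [hxa0]
            exact (ih ((n:ℝ)*η) ⟨hnη0, hnηx⟩ (le_refl _)).symm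
          have hFa : F (x - a) ≤ G (x - a) :=
            hFG _ ⟨by linarith [ha.2], by linarith [ha.1, hx.2]⟩
          have hk := hkeyF a ha hle
          rw [hGa₀]
          nlinarith
        have eq1 : sInf ((fun a => ℓ a + β * F (x - a)) '' Icc 0 x)
            = sInf ((fun a => ℓ a + β * F (x - a)) '' Icc a₀ x) :=
          csInf_image_Icc_eq ha₀pos.le ha₀x hfloorF hkeyF
        have eq2 : sInf ((fun a => ℓ a + β * G (x - a)) '' Icc 0 x)
            = sInf ((fun a => ℓ a + β * G (x - a)) '' Icc a₀ x) :=
          csInf_image_Icc_eq ha₀pos.le ha₀x hfloorG hkeyG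
        have eqmid : ((fun a => ℓ a + β * F (x - a)) '' Icc a₀ x)
            = ((fun a => ℓ a + β * G (x - a)) '' Icc a₀ x) := by
          apply image_congr
          intro a ha
          have hxa : x - a ∈ Icc 0 xhat := ⟨by linarith [ha.2], by linarith [ha.1, hx.2, ha₀pos]⟩
          have hle : x - a ≤ (n:ℝ) * η := by
            have := ha.1
            rw [ha₀def] at this
            linarith
          rw [ih (x - a) hxa hle]
        show sInf ((fun a => ℓ a + β * F (x - a)) '' Icc 0 x)
            = sInf ((fun a => ℓ a + β * G (x - a)) '' Icc 0 x)
        rw [eq1, eq2, eqmid]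

lemma iter_sandwich₂ (hxhat : 0 ≤ xhat) (hzero : ℓ 0 = 0)
    (hconv : ConvexOn ℝ (Icc 0 xhat) ℓ)
    (hφℓ : ∀ y ∈ Icc 0 xhat, ℓd 0 * y ≤ ℓ y)
    (hd0 : 0 < ℓd 0) (hβ : 1 < β)
    {w : ℝ → ℝ} (hwlb : ∀ y ∈ Icc 0 xhat, ℓd 0 * y ≤ w y)
    (hwub : ∀ y ∈ Icc 0 xhat, w y ≤ ℓ y) (n : ℕ) :
    ∀ x ∈ Icc 0 xhat,
      (bellman β ℓ)^[n] (fun y => ℓd 0 * y) x ≤ (bellman β ℓ)^[n] w x ∧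
      (bellman β ℓ)^[n] w x ≤ (bellman β ℓ)^[n] ℓ x := by
  induction n with
  | zero => exact fun x hx => ⟨hwlb x hx, hwub x hx⟩
  | succ n ih =>
      intro x hx
      have hφinv := inv_iter hxhat hzero hconv hφℓ hd0 hβ (inv_phi hd0 hφℓ) n
      rw [Function.iterate_succ_apply', Function.iterate_succ_apply',
        Function.iterate_succ_apply']
      constructor
      · exact bellman_mono hβ hd0 hφℓ hφinv.2.1 (fun y hy => (ih y hy).1) hx
      · exact bellman_mono hβ hd0 hφℓ
          (fun y hy => le_trans (hφinv.2.1 y hy) ((ih y hy).1))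
          (fun y hy => (ih y hy).2) hx

end Aux

/-- for every `n ∈ ℕ` and every increasing convex `w ∈ 𝓘`, the `n`-th Bellman
iterate satisfies `(Tⁿw)(x) = w*(x)` for all `x ∈ X` with `x ≤ n·η`; in particular, for
`n ≥ x̂/η` one has `Tⁿw = w*` on all of `X`. -/
theorem bellman_iterates_converge_in_finite_time
    (xhat : ℝ) (hxhat : 0 < xhat)
    (ℓ ℓd : ℝ → ℝ)
    (hderiv : ∀ x ∈ Set.Icc 0 xhat, HasDerivAt ℓ (ℓd x) x)
    (hcont_deriv : ContinuousOn ℓd (Set.Icc 0 xhat))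
    (hconv : StrictConvexOn ℝ (Set.Icc 0 xhat) ℓ)
    (hzero : ℓ 0 = 0)
    (hpos : ∀ x ∈ Set.Icc 0 xhat, 0 < ℓd x)
    (β : ℝ) (hβ : 1 < β)
    (wstar : ℝ → ℝ)
    (hwstar_mem : wstar ∈ candidateClass xhat ℓ ℓd)
    (hwstar_fix : ∀ x ∈ Set.Icc 0 xhat, bellman β ℓ wstar x = wstar x)
    (η : ℝ)
    (hη_mem : η ∈ Set.Icc 0 xhat ∧ ℓd η ≤ β * ℓd 0)
    (hη_max : ∀ x ∈ Set.Icc 0 xhat, ℓd x ≤ β * ℓd 0 → x ≤ η) :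
    0 < η ∧
    ∀ (n : ℕ) (w : ℝ → ℝ), w ∈ candidateClass xhat ℓ ℓd →
      MonotoneOn w (Set.Icc 0 xhat) → ConvexOn ℝ (Set.Icc 0 xhat) w →
      (∀ x ∈ Set.Icc 0 xhat, x ≤ n * η → (bellman β ℓ)^[n] w x = wstar x) ∧
      (xhat / η ≤ n → ∀ x ∈ Set.Icc 0 xhat, (bellman β ℓ)^[n] w x = wstar x) := by
  obtain ⟨hη_mem1, hηβ⟩ := hη_mem
  have hd0 : 0 < ℓd 0 := hpos 0 ⟨le_refl _, hxhat.le⟩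
  have hconv' : ConvexOn ℝ (Icc 0 xhat) ℓ := hconv.convexOn
  have hφℓ : ∀ y ∈ Icc 0 xhat, ℓd 0 * y ≤ ℓ y := by
    intro y hy
    have := le_grad hconv' hderiv (⟨le_refl 0, hxhat.le⟩ : (0:ℝ) ∈ Icc 0 xhat) hy hy.1
    simp only [hzero, sub_zero] at this
    linarith
  -- η > 0
  have hηpos : 0 < η := by
    have hlt : ℓd 0 < β * ℓd 0 := by nlinarith
    have hcw : ContinuousWithinAt ℓd (Icc 0 xhat) 0 :=
      hcont_deriv 0 ⟨le_refl _, hxhat.le⟩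
    have hev : ∀ᶠ y in nhdsWithin 0 (Icc 0 xhat), ℓd y < β * ℓd 0 :=
      hcw.eventually_lt_const hlt
    rw [Filter.Eventually, Metric.mem_nhdsWithin_iff] at hev
    obtain ⟨ε, hε, hsub⟩ := hev
    set y := min (ε/2) xhat with hydef
    have hy0 : 0 < y := lt_min (by linarith) hxhat
    have hymem : y ∈ Icc 0 xhat := ⟨hy0.le, min_le_right _ _⟩
    have hyball : y ∈ Metric.ball (0:ℝ) ε := by
      simp only [Metric.mem_ball, Real.dist_eq, sub_zero, abs_of_pos hy0]
      have : y ≤ ε / 2 := min_le_left _ _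
      linarith
    have hylt : ℓd y < β * ℓd 0 := hsub ⟨hyball, hymem⟩
    have := hη_max y hymem hylt.le
    linarith
  refine ⟨hηpos, ?_⟩
  -- fixed point iterates
  have hfix_iter : ∀ n : ℕ, ∀ x ∈ Icc 0 xhat, (bellman β ℓ)^[n] wstar x = wstar x := by
    intro n
    induction n with
    | zero => intro x hx; rfl
    | succ n ih =>
        intro x hx
        rw [Function.iterate_succ_apply']
        rw [bellman_congr hx.1 (fun y hy => ih y ⟨hy.1, hy.2.trans hx.2⟩)]
        exact hwstar_fix x hx
  intro n w hw _ _
  have hmain := main_eq hxhat hzero hconv' hderiv hd0 hβ hη_mem1 hηβ n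
  have hsand_w := iter_sandwich₂ hxhat.le hzero hconv' hφℓ hd0 hβ
    (fun y hy => (hw.2 y hy).1) (fun y hy => (hw.2 y hy).2) n
  have hsand_star := iter_sandwich₂ hxhat.le hzero hconv' hφℓ hd0 hβ
    (fun y hy => (hwstar_mem.2 y hy).1) (fun y hy => (hwstar_mem.2 y hy).2) n
  have key : ∀ x ∈ Icc 0 xhat, x ≤ n * η → (bellman β ℓ)^[n] w x = wstar x := by
    intro x hx hxn
    have h1 := hsand_w x hx
    have h2 := hsand_star x hx
    have h3 := hmain x hx hxn
    have h4 := hfix_iter n x hx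
    rw [h4] at h2
    apply le_antisymm <;> linarith [h1.1, h1.2, h2.1, h2.2]
  refine ⟨key, ?_⟩
  intro hn x hx
  have hxn : x ≤ (n:ℝ) * η := by
    have := (div_le_iff₀ hηpos).1 hn
    linarith [hx.2]
  exact key x hx hxn
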